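/- Assume each X_i (0 ≤ i ≤ n) is a compact Polish space and each Y_i is a Polish space, and let Q = (q_i) be a forward family satisfying condition (CB). Then the family of probability measures { →Q_{0,n}(· | x^n) : x^n ∈ X_{0,n} } on Y_{0,n} is uniformly tight, and hence relatively compact in the topology of weak convergence of probability measures. -/

import Mathlib

open MeasureTheory ProbabilityTheory Filter
open scoped ENNReal NNReal

namespace PaperDI

lemma measurable_finSnoc {Z : ℕ → Type*} [∀ i, MeasurableSpace (Z i)] (k : ℕ) :
    Measurable (fun p : (∀ j : Fin k, Z j) × Z k =>
      (Fin.snoc p.1 p.2 : ∀ j : Fin (k + 1), Z j)) := by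
  apply measurable_pi_lambda
  intro j
  induction j using Fin.lastCases with
  | last => simpa using measurable_snd
  | cast i =>
    simp only [Fin.snoc_castSucc]
    first
      | exact (measurable_pi_apply i).comp measurable_fst
      | fun_prop

/-- Restriction of a prefix of length `k+1` to the prefix of length `k`. -/
def restr {Z : ℕ → Type*} (k : ℕ) (z : ∀ j : Fin (k + 1), Z j) : ∀ j : Fin k, Z j :=
  fun j => z j.castSucc

lemma measurable_restr {Z : ℕ → Type*} [∀ i, MeasurableSpace (Z i)] (k : ℕ) :
    Measurable (restr (Z := Z) k) :=
  measurable_pi_lambda _ fun _ => measurable_pi_apply _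

variable (X Y : ℕ → Type*) [∀ i, MeasurableSpace (X i)] [∀ i, MeasurableSpace (Y i)]

/-- A feedback family `(p_0, …, p_n)`: `p_0` is a probability measure on `X_0` (a Markov
kernel from the one-point space of empty prefixes) and `p_i` is a Markov kernel from
`X_{0,i-1} × Y_{0,i-1}` to `X_i`. -/
structure FeedbackFamily (n : ℕ) where
  p : ∀ i : Fin (n + 1), Kernel ((∀ j : Fin (i : ℕ), X j) × (∀ j : Fin (i : ℕ), Y j)) (X i)
  markov : ∀ i, IsMarkovKernel (p i)

/-- A forward family `(q_0, …, q_n)`: `q_i` is a Markov kernel from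
`Y_{0,i-1} × X_{0,i}` to `Y_i`. -/
structure ForwardFamily (n : ℕ) where
  q : ∀ i : Fin (n + 1), Kernel ((∀ j : Fin (i : ℕ), Y j) × (∀ j : Fin ((i : ℕ) + 1), X j)) (Y i)
  markov : ∀ i, IsMarkovKernel (q i)

variable {X Y} {n : ℕ}

/-- The causally conditioned kernel `←P_{0,k}` from `Y_{0,k-1}` to `X_{0,k}`. -/
noncomputable def back (P : FeedbackFamily X Y n) :
    (k : ℕ) → k ≤ n → Kernel (∀ j : Fin k, Y j) (∀ j : Fin (k + 1), X j)
  | 0, _ =>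
      Kernel.map ((P.p ⟨0, Nat.succ_pos n⟩).comap (fun _ => default) measurable_const)
        (fun x0 => (Fin.snoc default x0 : ∀ j : Fin 1, X j))
  | (k + 1), h =>
      Kernel.map
        (((back P k (by omega)).comap (restr k) (measurable_restr k)) ⊗ₖ
          ((P.p ⟨k + 1, by omega⟩).comap
            (fun t : (∀ j : Fin (k + 1), Y j) × (∀ j : Fin (k + 1), X j) => (t.2, t.1))
            (measurable_snd.prodMk measurable_fst)))
        (fun t : (∀ j : Fin (k + 1), X j) × X (k + 1) =>
          (Fin.snoc t.1 t.2 : ∀ j : Fin (k + 2), X j))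

/-- The causally conditioned kernel `→Q_{0,k}` from `X_{0,k}` to `Y_{0,k}`. -/
noncomputable def fwd (Q : ForwardFamily X Y n) :
    (k : ℕ) → k ≤ n → Kernel (∀ j : Fin (k + 1), X j) (∀ j : Fin (k + 1), Y j)
  | 0, _ =>
      Kernel.map ((Q.q ⟨0, Nat.succ_pos n⟩).comap (fun x => (default, x))
          (measurable_const.prodMk measurable_id))
        (fun y0 => (Fin.snoc default y0 : ∀ j : Fin 1, Y j))
  | (k + 1), h =>
      Kernel.map
        (((fwd Q k (by omega)).comap (restr (k + 1)) (measurable_restr (k + 1))) ⊗ₖ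
          ((Q.q ⟨k + 1, by omega⟩).comap
            (fun t : (∀ j : Fin (k + 2), X j) × (∀ j : Fin (k + 1), Y j) => (t.2, t.1))
            (measurable_snd.prodMk measurable_fst)))
        (fun t : (∀ j : Fin (k + 1), Y j) × Y (k + 1) =>
          (Fin.snoc t.1 t.2 : ∀ j : Fin (k + 2), Y j))

/-- The interleaved joint measure of `←P ⊗ →Q` on prefixes of length `k`. -/
noncomputable def jointAux (P : FeedbackFamily X Y n) (Q : ForwardFamily X Y n) :
    (k : ℕ) → k ≤ n + 1 → Measure ((∀ j : Fin k, X j) × (∀ j : Fin k, Y j))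
  | 0, _ => Measure.dirac default
  | (k + 1), h =>
      let μ1 := (jointAux P Q k (by omega)) ⊗ₘ (P.p ⟨k, by omega⟩)
      let μ2 := μ1.map
          (fun t : ((∀ j : Fin k, X j) × (∀ j : Fin k, Y j)) × X k =>
            (t.1.2, (Fin.snoc t.1.1 t.2 : ∀ j : Fin (k + 1), X j)))
      let μ3 := μ2 ⊗ₘ (Q.q ⟨k, by omega⟩)
      μ3.map
          (fun t : ((∀ j : Fin k, Y j) × (∀ j : Fin (k + 1), X j)) × Y k =>
            (t.1.2, (Fin.snoc t.1.1 t.2 : ∀ j : Fin (k + 1), Y j)))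

/-- The joint measure `←P ⊗ →Q` on `X_{0,n} × Y_{0,n}`. -/
noncomputable def joint (P : FeedbackFamily X Y n) (Q : ForwardFamily X Y n) :
    Measure ((∀ j : Fin (n + 1), X j) × (∀ j : Fin (n + 1), Y j)) :=
  jointAux P Q (n + 1) le_rfl

/-- The marginal `ν_{0,n}` of `←P ⊗ →Q` on `Y_{0,n}`. -/
noncomputable def nu (P : FeedbackFamily X Y n) (Q : ForwardFamily X Y n) :
    Measure (∀ j : Fin (n + 1), Y j) :=
  (joint P Q).map Prod.snd

/-- The measure `←P ⊗ λ` on `X_{0,n} × Y_{0,n}`, i.e. the measure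
`←P_{0,n}(dx^n | y^{n-1}) ⊗ λ(dy^n)`. -/
noncomputable def backProd (P : FeedbackFamily X Y n) (lam : Measure (∀ j : Fin (n + 1), Y j)) :
    Measure ((∀ j : Fin (n + 1), X j) × (∀ j : Fin (n + 1), Y j)) :=
  (lam ⊗ₘ ((back P n le_rfl).comap (restr n) (measurable_restr n))).map Prod.swap

open Classical in
/-- Kullback-Leibler divergence (relative entropy) `D(μ ‖ ν)`, with the convention
`D(μ ‖ ν) = ∞` when absolute continuity fails. -/
noncomputable def KL {Z : Type*} [MeasurableSpace Z] (μ ν : Measure Z) : ℝ≥0∞ :=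
  if μ ≪ ν ∧ Integrable (llr μ ν) μ then ENNReal.ofReal (∫ z, llr μ ν z ∂μ) else ⊤

/-- Directed information `I(←P, →Q) = D(←P ⊗ →Q ‖ ←P ⊗ ν_{0,n})`. -/
noncomputable def DI (P : FeedbackFamily X Y n) (Q : ForwardFamily X Y n) : ℝ≥0∞ :=
  KL (joint P Q) (backProd P (nu P Q))

/-- Weak convergence of a sequence of measures: integrals of every bounded continuous
real-valued function converge. -/
def WeakTendsto {Z : Type*} [MeasurableSpace Z] [TopologicalSpace Z]
    (μ : ℕ → Measure Z) (μ0 : Measure Z) : Prop :=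
  ∀ f : BoundedContinuousFunction Z ℝ,
    Tendsto (fun α => ∫ z, f z ∂(μ α)) atTop (nhds (∫ z, f z ∂μ0))

/-- Uniform tightness of a family of measures. -/
def UniformlyTight {Z : Type*} [MeasurableSpace Z] [TopologicalSpace Z]
    (M : Set (Measure Z)) : Prop :=
  ∀ ε : ℝ≥0∞, 0 < ε → ∃ K : Set Z, IsCompact K ∧ ∀ μ ∈ M, 1 - ε ≤ μ K

/-- The marginal `π_i` of `←P ⊗ →Q` on `X_{0,i} × Y_{0,i-1}`. -/
noncomputable def margin (P : FeedbackFamily X Y n) (Q : ForwardFamily X Y n) (i : Fin (n + 1)) :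
    Measure ((∀ j : Fin ((i : ℕ) + 1), X j) × (∀ j : Fin (i : ℕ), Y j)) :=
  (joint P Q).map (fun t =>
    ((fun j : Fin ((i : ℕ) + 1) => t.1 (Fin.castLE i.isLt j)),
     (fun j : Fin (i : ℕ) => t.2 (Fin.castLE i.isLt.le j))))

/-- The iterated product measure of a tuple of kernels `(λ_0, …, λ_n)`,
`λ_i : Y_{0,i-1} → Y_i`, on prefixes of length `k`. -/
noncomputable def chain {Z : ℕ → Type*} [∀ i, MeasurableSpace (Z i)] {n : ℕ}
    (lam : ∀ i : Fin (n + 1), Kernel (∀ j : Fin (i : ℕ), Z j) (Z i)) :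
    (k : ℕ) → k ≤ n + 1 → Measure (∀ j : Fin k, Z j)
  | 0, _ => Measure.dirac default
  | (k + 1), h =>
      ((chain lam k (by omega)) ⊗ₘ (lam ⟨k, by omega⟩)).map
        (fun t : (∀ j : Fin k, Z j) × Z k => (Fin.snoc t.1 t.2 : ∀ j : Fin (k + 1), Z j))

/-- The joint measure `←S ⊗ →R` on `X_{0,n} × Y_{0,n}` determined by a reversed pair
`(S, R)`; a reversed pair is formally a feedback family and a forward family with the
roles of `X` and `Y` interchanged. -/
noncomputable def revJoint (S : FeedbackFamily Y X n) (R : ForwardFamily Y X n) :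
    Measure ((∀ j : Fin (n + 1), X j) × (∀ j : Fin (n + 1), Y j)) :=
  (joint S R).map Prod.swap

/-- `∫ log(dσ/dπ) dμ`, as an extended real number (integral of the positive part minus
integral of the negative part). -/
noncomputable def elogInt {Z : Type*} [MeasurableSpace Z] (σ π μ : Measure Z) : EReal :=
  ((∫⁻ z, ENNReal.ofReal (llr σ π z) ∂μ : ℝ≥0∞) : EReal) -
    ((∫⁻ z, ENNReal.ofReal (-llr σ π z) ∂μ : ℝ≥0∞) : EReal)

/-- `∫ |log(dμ/dν)| dμ`. -/
noncomputable def absKL {Z : Type*} [MeasurableSpace Z] (μ ν : Measure Z) : ℝ≥0∞ :=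
  ∫⁻ z, ENNReal.ofReal |llr μ ν z| ∂μ

section Topology

variable [∀ i, TopologicalSpace (X i)] [∀ i, TopologicalSpace (Y i)]

/-- Condition (CA): each `p_i` is weakly (Feller) continuous in the conditioning
variables `(x^{i-1}, y^{i-1})`. -/
def CondCA (P : FeedbackFamily X Y n) : Prop :=
  ∀ (i : Fin (n + 1)) (g : BoundedContinuousFunction (X i) ℝ),
    Continuous (fun t : (∀ j : Fin (i : ℕ), X j) × (∀ j : Fin (i : ℕ), Y j) =>
      ∫ x, g x ∂(P.p i t))

/-- Condition (CB): each `q_i` is weakly (Feller) continuous in the conditioning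
variables `(x^i, y^{i-1})`. -/
def CondCB (Q : ForwardFamily X Y n) : Prop :=
  ∀ (i : Fin (n + 1)) (g : BoundedContinuousFunction (Y i) ℝ),
    Continuous (fun t : (∀ j : Fin ((i : ℕ) + 1), X j) × (∀ j : Fin (i : ℕ), Y j) =>
      ∫ y, g y ∂(Q.q i (t.2, t.1)))

end Topology

section AuxTight
open Metric Set Filter

lemma feller_tight_scale {T Z : Type*} [TopologicalSpace T] [MetricSpace Z] [MeasurableSpace Z]
    [BorelSpace Z]
    (κ : T → Measure Z) (hm : ∀ t, IsProbabilityMeasure (κ t))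
    (hfeller : ∀ g : Z → ℝ, Continuous g → (∃ C, ∀ z, |g z| ≤ C) →
      Continuous fun t => ∫ z, g z ∂κ t)
    {S : Set T} (hS : IsCompact S)
    (u : ℕ → Z) (hu : DenseRange u) {δ ε' : ℝ} (hδ : 0 < δ) (hε' : 0 < ε') :
    ∃ m : ℕ, ∀ t ∈ S,
      κ t ((⋃ j ∈ Finset.range (m + 1), Metric.closedBall (u j) (2 * δ)))ᶜ ≤
        ENNReal.ofReal ε' := by
  by_cases h1 : 1 ≤ ε'
  · exact ⟨0, fun t ht => le_trans (le_trans (measure_mono (subset_univ _))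
      (le_of_eq (hm t).measure_univ)) (ENNReal.one_le_ofReal.mpr h1)⟩
  push_neg at h1
  set F : ℕ → Set Z := fun m => ⋃ j ∈ Finset.range (m + 1), Metric.closedBall (u j) δ with hF
  have hFne : ∀ m, (F m).Nonempty := fun m =>
    ⟨u 0, Set.mem_biUnion (Finset.mem_range.mpr (Nat.succ_pos m)) (Metric.mem_closedBall_self hδ.le)⟩
  have hFmono : Monotone F := by
    intro a b hab
    apply Set.iUnion₂_subset
    intro j hj
    show closedBall (u j) δ ⊆ ⋃ j ∈ Finset.range (b + 1), closedBall (u j) δ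
    apply Set.subset_biUnion_of_mem (u := fun j => closedBall (u j) δ)
    simp only [Finset.mem_range] at hj
    exact Finset.mem_range.mpr (by omega)
  set g : ℕ → Z → ℝ := fun m z => max (1 - infDist z (F m) / δ) 0 with hg
  have hgcont : ∀ m, Continuous (g m) :=
    fun m => ((continuous_const.sub ((continuous_infDist_pt (F m)).div_const δ)).max continuous_const)
  have hg0 : ∀ m z, 0 ≤ g m z := fun m z => le_max_right _ _
  have hg1 : ∀ m z, g m z ≤ 1 := by
    intro m z
    refine max_le ?_ zero_le_one
    have : 0 ≤ infDist z (F m) / δ := div_nonneg infDist_nonneg hδ.le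
    linarith
  have hgabs : ∀ m, ∃ C, ∀ z, |g m z| ≤ C :=
    fun m => ⟨1, fun z => abs_le.mpr ⟨by linarith [hg0 m z], hg1 m z⟩⟩
  have hgmono : ∀ z, Monotone fun m => g m z := by
    intro z a b hab
    have h2 : infDist z (F b) ≤ infDist z (F a) :=
      infDist_le_infDist_of_subset (hFmono hab) (hFne a)
    have h3 : infDist z (F b) / δ ≤ infDist z (F a) / δ := by gcongr
    exact max_le_max (by linarith) le_rfl
  have hglim : ∀ z : Z, Tendsto (fun m => g m z) atTop (nhds 1) := by
    intro z
    obtain ⟨j, hj⟩ := hu.exists_dist_lt z hδ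
    have : ∀ m ≥ j, g m z = 1 := by
      intro m hm'
      have hzF : z ∈ F m :=
        Set.mem_biUnion (Finset.mem_range.mpr (by omega)) (Metric.mem_closedBall.mpr hj.le)
      simp [hg, infDist_zero_of_mem hzF]
    exact tendsto_atTop_of_eventually_const this
  have hginte : ∀ m (t : T), Integrable (g m) (κ t) := by
    intro m t
    have := hm t
    exact (integrable_const (1 : ℝ)).mono' ((hgcont m).aestronglyMeasurable)
      (ae_of_all _ fun z => by rw [Real.norm_eq_abs, abs_of_nonneg (hg0 m z)]; exact hg1 m z)
  set I : T → ℕ → ℝ := fun t m => ∫ z, g m z ∂κ t with hI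
  have hIlim : ∀ t, Tendsto (fun m => I t m) atTop (nhds 1) := by
    intro t
    have := hm t
    have h := tendsto_integral_of_dominated_convergence (μ := κ t) (fun _ => (1:ℝ))
      (fun m => (hgcont m).aestronglyMeasurable) (integrable_const 1)
      (fun m => ae_of_all _ fun z => by
        rw [Real.norm_eq_abs, abs_of_nonneg (hg0 m z)]; exact hg1 m z)
      (ae_of_all _ hglim)
    simpa using h
  have hIcont : ∀ m, Continuous fun t => I t m := fun m => hfeller (g m) (hgcont m) (hgabs m)
  set U : ℕ → Set T := fun m => {t | 1 - ε' < I t m} with hU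
  have hUopen : ∀ m, IsOpen (U m) := fun m => isOpen_lt continuous_const (hIcont m)
  have hUmono : Monotone U := by
    intro a b hab t ht
    have : I t a ≤ I t b :=
      integral_mono (hginte a t) (hginte b t) fun z => hgmono z hab
    exact lt_of_lt_of_le ht this
  have hcover : S ⊆ ⋃ m, U m := by
    intro t ht
    have : ∀ᶠ m in atTop, 1 - ε' < I t m :=
      (hIlim t).eventually_const_lt (by linarith)
    obtain ⟨m, hm'⟩ := this.exists
    exact Set.mem_iUnion.mpr ⟨m, hm'⟩
  obtain ⟨s, hs⟩ := hS.elim_finite_subcover U hUopen hcover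
  refine ⟨s.sup id, fun t ht => ?_⟩
  have htU : t ∈ U (s.sup id) := by
    obtain ⟨m, hms, htm⟩ := Set.mem_iUnion₂.mp (hs ht)
    exact hUmono (Finset.le_sup (f := id) hms) htm
  set A : Set Z := ⋃ j ∈ Finset.range (s.sup id + 1), Metric.closedBall (u j) (2 * δ) with hA
  have hAmeas : MeasurableSet A :=
    MeasurableSet.biUnion (Finset.range _).countable_toSet
      (fun j _ => measurableSet_closedBall)
  -- g ≤ indicator A
  have hgle : ∀ z, g (s.sup id) z ≤ A.indicator (fun _ => (1:ℝ)) z := by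
    intro z
    by_cases hz : z ∈ A
    · rw [Set.indicator_of_mem hz]; exact hg1 _ z
    · rw [Set.indicator_of_notMem hz]
      have hdist : δ ≤ infDist z (F (s.sup id)) := by
        by_contra hlt
        push_neg at hlt
        obtain ⟨y, hy, hzy⟩ := (infDist_lt_iff (hFne _)).mp hlt
        obtain ⟨j, hj, hyj⟩ := Set.mem_iUnion₂.mp hy
        have hzj : 2 * δ < dist z (u j) := by
          by_contra hle
          push_neg at hle
          exact hz (Set.mem_biUnion hj (Metric.mem_closedBall.mpr hle))
        have := Metric.mem_closedBall.mp hyj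
        have := dist_triangle z y (u j)
        have : dist z y ≥ dist z (u j) - dist y (u j) := by
          have := dist_triangle z y (u j); linarith
        have hyuj : dist y (u j) ≤ δ := Metric.mem_closedBall.mp hyj
        linarith
      have : 1 - infDist z (F (s.sup id)) / δ ≤ 0 := by
        have : 1 ≤ infDist z (F (s.sup id)) / δ := (one_le_div hδ).mpr hdist
        linarith
      exact max_le this le_rfl
  have := hm t
  have hintle : I t (s.sup id) ≤ (κ t A).toReal := by
    have h2 : I t (s.sup id) ≤ ∫ z, A.indicator (fun _ => (1:ℝ)) z ∂κ t :=
      integral_mono (hginte _ t) ((integrable_const (1:ℝ)).indicator hAmeas) hgle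
    rwa [MeasureTheory.integral_indicator_const (1:ℝ) hAmeas, smul_eq_mul, mul_one] at h2
  -- conclude
  have hAge : ENNReal.ofReal (1 - ε') ≤ κ t A :=
    ENNReal.ofReal_le_of_le_toReal (le_trans (le_of_lt htU) hintle)
  rw [prob_compl_eq_one_sub hAmeas, tsub_le_iff_right]
  calc (1 : ENNReal) = ENNReal.ofReal (ε' + (1 - ε')) := by norm_num
    _ = ENNReal.ofReal ε' + ENNReal.ofReal (1 - ε') :=
        ENNReal.ofReal_add hε'.le (by linarith)
    _ ≤ ENNReal.ofReal ε' + κ t A := add_le_add le_rfl hAge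

lemma feller_tight {T Z : Type*} [TopologicalSpace T] [TopologicalSpace Z] [MeasurableSpace Z]
    [BorelSpace Z] [PolishSpace Z]
    (κ : T → Measure Z) (hm : ∀ t, IsProbabilityMeasure (κ t))
    (hfeller : ∀ g : Z → ℝ, Continuous g → (∃ C, ∀ z, |g z| ≤ C) →
      Continuous fun t => ∫ z, g z ∂κ t)
    {S : Set T} (hS : IsCompact S) {ε : ℝ} (hε : 0 < ε) :
    ∃ K : Set Z, IsCompact K ∧ ∀ t ∈ S, κ t Kᶜ ≤ ENNReal.ofReal ε := by
  rcases S.eq_empty_or_nonempty with rfl | ⟨t₀, ht₀⟩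
  · exact ⟨∅, isCompact_empty, fun t ht => absurd ht (Set.notMem_empty t)⟩
  have hZ : Nonempty Z := by
    by_contra h
    have h2 := (hm t₀).measure_univ
    rw [Set.univ_eq_empty_iff.mpr (not_nonempty_iff.mp h), measure_empty] at h2
    exact zero_ne_one h2
  letI := TopologicalSpace.upgradeIsCompletelyMetrizable Z
  obtain ⟨u, hu⟩ := TopologicalSpace.exists_dense_seq Z
  have hscale : ∀ p : ℕ, ∃ m : ℕ, ∀ t ∈ S,
      κ t ((⋃ j ∈ Finset.range (m + 1), Metric.closedBall (u j) (2 * (1 / (p + 1)))))ᶜ ≤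
        ENNReal.ofReal (ε * (1 / 2) ^ (p + 1)) := by
    intro p
    exact feller_tight_scale κ hm hfeller hS u hu
      (by positivity) (by positivity)
  choose m hmspec using hscale
  set A : ℕ → Set Z := fun p =>
    ⋃ j ∈ Finset.range (m p + 1), Metric.closedBall (u j) (2 * (1 / (p + 1))) with hA
  have hAclosed : ∀ p, IsClosed (A p) :=
    fun p => Set.Finite.isClosed_biUnion (Finset.range (m p + 1)).finite_toSet fun j _ => Metric.isClosed_closedBall
  refine ⟨⋂ p, A p, ?_, ?_⟩
  · apply TotallyBounded.isCompact_of_isClosed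
    · rw [Metric.totallyBounded_iff]
      intro r hr
      obtain ⟨p, hp⟩ := exists_nat_one_div_lt (show (0:ℝ) < r / 2 by linarith)
      refine ⟨u '' {j | j ∈ Finset.range (m p + 1)}, (Set.Finite.image u
        ((Finset.range (m p + 1)).finite_toSet)), ?_⟩
      intro z hz
      have hzA : z ∈ A p := Set.mem_iInter.mp hz p
      obtain ⟨j, hj, hjz⟩ := Set.mem_iUnion₂.mp hzA
      refine Set.mem_biUnion (Set.mem_image_of_mem u hj) ?_
      have : dist z (u j) ≤ 2 * (1 / (p + 1)) := Metric.mem_closedBall.mp hjz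
      have : (1 : ℝ) / (p + 1) < r / 2 := hp
      exact Metric.mem_ball.mpr (by push_cast at *; linarith)
    · exact isClosed_iInter hAclosed
  · intro t ht
    have hsub : (⋂ p, A p)ᶜ = ⋃ p, (A p)ᶜ := by rw [Set.compl_iInter]
    rw [hsub]
    refine le_trans (measure_iUnion_le _) ?_
    have hbound : ∀ p, κ t (A p)ᶜ ≤ ENNReal.ofReal ε * (2⁻¹ : ℝ≥0∞) ^ (p + 1) := by
      intro p
      refine le_trans (hmspec p t ht) (le_of_eq ?_)
      rw [ENNReal.ofReal_mul hε.le, ENNReal.ofReal_pow (by norm_num)]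
      congr 1
      congr 1
      rw [one_div, ENNReal.ofReal_inv_of_pos (by norm_num)]
      norm_num
    refine le_trans (ENNReal.tsum_le_tsum hbound) ?_
    rw [ENNReal.tsum_mul_left, ENNReal.tsum_geometric_add_one, ENNReal.one_sub_inv_two,
      inv_inv]
    rw [show (2⁻¹ : ℝ≥0∞) * 2 = 1 by rw [ENNReal.inv_mul_cancel] <;> norm_num, mul_one]

lemma integrable_of_bounded_continuous {Z : Type*} [TopologicalSpace Z] [MeasurableSpace Z]
    [OpensMeasurableSpace Z] (μ : Measure Z) [IsProbabilityMeasure μ]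
    {g : Z → ℝ} (hg : Continuous g) {C : ℝ} (hC : ∀ z, |g z| ≤ C) : Integrable g μ :=
  (integrable_const C).mono' hg.aestronglyMeasurable
    (ae_of_all _ fun z => by rw [Real.norm_eq_abs]; exact hC z)

lemma abs_integral_le_of_abs_le {Z : Type*} [TopologicalSpace Z] [MeasurableSpace Z]
    [OpensMeasurableSpace Z] (μ : Measure Z) [IsProbabilityMeasure μ]
    {g : Z → ℝ} (hg : Continuous g) {C : ℝ} (hC : ∀ z, |g z| ≤ C) :
    |∫ z, g z ∂μ| ≤ C := by
  calc |∫ z, g z ∂μ| ≤ ∫ z, |g z| ∂μ := by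
        simpa [Real.norm_eq_abs] using norm_integral_le_integral_norm (f := g) (μ := μ)
    _ ≤ ∫ _, C ∂μ := integral_mono ((integrable_of_bounded_continuous μ hg hC).abs)
        (integrable_const C) hC
    _ = C := by simp

lemma continuous_integral_param {T Z : Type*} [TopologicalSpace T]
    [TopologicalSpace.PseudoMetrizableSpace T]
    [TopologicalSpace Z] [MeasurableSpace Z] [BorelSpace Z] [PolishSpace Z]
    (κ : T → Measure Z) (hm : ∀ t, IsProbabilityMeasure (κ t))
    (hfeller : ∀ g : Z → ℝ, Continuous g → (∃ C, ∀ z, |g z| ≤ C) →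
      Continuous fun t => ∫ z, g z ∂κ t)
    (F : T → Z → ℝ) (hF : Continuous fun p : T × Z => F p.1 p.2)
    {C : ℝ} (hC : ∀ t z, |F t z| ≤ C) :
    Continuous fun t => ∫ z, F t z ∂κ t := by
  letI : PseudoMetricSpace T := TopologicalSpace.pseudoMetrizableSpacePseudoMetric T
  letI := TopologicalSpace.upgradeIsCompletelyMetrizable Z
  apply SeqContinuous.continuous
  intro x t₀ hx
  have hFcont : ∀ t, Continuous (F t) := fun t => hF.comp (Continuous.prodMk_right t)
  have hFinteg : ∀ t t' : T, Integrable (F t) (κ t') := fun t t' => by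
    have := hm t'
    exact integrable_of_bounded_continuous (κ t') (hFcont t) (hC t)
  have hCnn : 0 ≤ C := by
    rcases isEmpty_or_nonempty Z with hZ | hZ
    · have h2 := (hm t₀).measure_univ
      rw [Set.univ_eq_empty_iff.mpr hZ, measure_empty] at h2
      exact absurd h2 zero_ne_one
    · exact le_trans (abs_nonneg _) (hC t₀ hZ.some)
  rw [Metric.tendsto_atTop]
  intro ε hε
  have hS : IsCompact (insert t₀ (Set.range x)) := hx.isCompact_insert_range
  obtain ⟨K, hK, hKle⟩ := feller_tight κ hm hfeller hS
    (show (0:ℝ) < ε / (8 * (C + 1)) by positivity)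
  have hSK : IsCompact ((insert t₀ (Set.range x)) ×ˢ K) := hS.prod hK
  have hucont : UniformContinuousOn (fun p : T × Z => F p.1 p.2)
      ((insert t₀ (Set.range x)) ×ˢ K) :=
    hSK.uniformContinuousOn_of_continuous hF.continuousOn
  obtain ⟨δ, hδ, hδspec⟩ := Metric.uniformContinuousOn_iff.mp hucont (ε/4) (by positivity)
  obtain ⟨N₁, hN₁⟩ := Metric.tendsto_atTop.mp hx δ hδ
  have h2 : Tendsto (fun m' => ∫ z, F t₀ z ∂κ (x m')) atTop (nhds (∫ z, F t₀ z ∂κ t₀)) :=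
    ((hfeller (F t₀) (hFcont t₀) ⟨C, hC t₀⟩).tendsto t₀).comp hx
  obtain ⟨N₂, hN₂⟩ := Metric.tendsto_atTop.mp h2 (ε/4) (by positivity)
  refine ⟨max N₁ N₂, fun m hm' => ?_⟩
  have hm₁ : N₁ ≤ m := le_trans (le_max_left _ _) hm'
  have hm₂ : N₂ ≤ m := le_trans (le_max_right _ _) hm'
  have hKmeas : MeasurableSet K := hK.isClosed.measurableSet
  have := hm (x m)
  have hterm1 : |∫ z, F (x m) z ∂κ (x m) - ∫ z, F t₀ z ∂κ (x m)| ≤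
      ε/4 + 2*C*(ε / (8 * (C + 1))) := by
    rw [← integral_sub (hFinteg (x m) (x m)) (hFinteg t₀ (x m))]
    have hptwise : ∀ z, |F (x m) z - F t₀ z| ≤
        ε/4 + (2*C) * Kᶜ.indicator (fun _ => (1:ℝ)) z := by
      intro z
      by_cases hz : z ∈ K
      · rw [Set.indicator_of_notMem (by simpa using hz)]
        have hp : ((x m, z) : T × Z) ∈ (insert t₀ (Set.range x)) ×ˢ K :=
          ⟨Set.mem_insert_of_mem _ ⟨m, rfl⟩, hz⟩
        have hq : ((t₀, z) : T × Z) ∈ (insert t₀ (Set.range x)) ×ˢ K :=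
          ⟨Set.mem_insert _ _, hz⟩
        have hdeq : dist ((x m, z) : T × Z) (t₀, z) = dist (x m) t₀ := by
          rw [Prod.dist_eq]
          simp [max_eq_left dist_nonneg]
        have hd : dist ((x m, z) : T × Z) (t₀, z) < δ := by
          rw [hdeq]; exact hN₁ m hm₁
        have := hδspec _ hp _ hq hd
        rw [Real.dist_eq] at this
        linarith [this.le]
      · rw [Set.indicator_of_mem (by simpa using hz), mul_one]
        have h3 := hC (x m) z
        have h4 := hC t₀ z
        have habs : |F (x m) z - F t₀ z| ≤ 2*C := by
          calc |F (x m) z - F t₀ z| ≤ |F (x m) z| + |F t₀ z| := abs_sub _ _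
            _ ≤ 2*C := by linarith
        linarith
    have hKc : (κ (x m) Kᶜ).toReal ≤ ε / (8 * (C + 1)) := by
      refine ENNReal.toReal_le_of_le_ofReal (by positivity) ?_
      exact hKle (x m) (Set.mem_insert_of_mem _ ⟨m, rfl⟩)
    calc |∫ z, (F (x m) z - F t₀ z) ∂κ (x m)|
        ≤ ∫ z, |F (x m) z - F t₀ z| ∂κ (x m) := by
          simpa [Real.norm_eq_abs] using
            norm_integral_le_integral_norm (f := fun z => F (x m) z - F t₀ z) (μ := κ (x m))
      _ ≤ ∫ z, (ε/4 + (2*C) * Kᶜ.indicator (fun _ => (1:ℝ)) z) ∂κ (x m) := by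
          refine integral_mono ((hFinteg (x m) (x m)).sub (hFinteg t₀ (x m))).abs ?_ hptwise
          exact (integrable_const _).add
            (((integrable_const (1:ℝ)).indicator hKmeas.compl).const_mul _)
      _ = ε/4 + (2*C) * (κ (x m) Kᶜ).toReal := by
          rw [integral_add (integrable_const _)
            (((integrable_const (1:ℝ)).indicator hKmeas.compl).const_mul _),
            integral_const_mul, MeasureTheory.integral_indicator_const (1:ℝ) hKmeas.compl]
          simp [Measure.real]
      _ ≤ ε/4 + 2*C*(ε / (8 * (C + 1))) := by
          have : (2*C) * (κ (x m) Kᶜ).toReal ≤ 2*C*(ε / (8 * (C + 1))) :=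
            mul_le_mul_of_nonneg_left hKc (by positivity)
          linarith
  have hfinal : dist (∫ z, F (x m) z ∂κ (x m)) (∫ z, F t₀ z ∂κ t₀) ≤
      |∫ z, F (x m) z ∂κ (x m) - ∫ z, F t₀ z ∂κ (x m)| +
        dist (∫ z, F t₀ z ∂κ (x m)) (∫ z, F t₀ z ∂κ t₀) := by
    rw [Real.dist_eq, Real.dist_eq]
    have := abs_sub_abs_le_abs_sub (∫ z, F (x m) z ∂κ (x m)) (∫ z, F t₀ z ∂κ (x m))
    calc |∫ z, F (x m) z ∂κ (x m) - ∫ z, F t₀ z ∂κ t₀| ≤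
        |∫ z, F (x m) z ∂κ (x m) - ∫ z, F t₀ z ∂κ (x m)| +
        |∫ z, F t₀ z ∂κ (x m) - ∫ z, F t₀ z ∂κ t₀| := abs_sub_le _ _ _
      _ = _ := rfl
  have h2C : 2*C*(ε / (8 * (C + 1))) ≤ ε/4 := by
    have hC1 : (0:ℝ) < C + 1 := by linarith
    rw [show 2*C*(ε / (8 * (C + 1))) = (C / (C+1)) * (ε/4) by field_simp; ring]
    have hd1 : C / (C+1) ≤ 1 := div_le_one_of_le₀ (by linarith) hC1.le
    have hd0 : 0 ≤ C / (C+1) := div_nonneg hCnn hC1.le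
    nlinarith [hε.le]
  have := hN₂ m hm₂
  calc dist (∫ z, F (x m) z ∂κ (x m)) (∫ z, F t₀ z ∂κ t₀) ≤ _ := hfinal
    _ < (ε/4 + 2*C*(ε / (8 * (C + 1)))) + ε/4 := by
        apply add_lt_add_of_le_of_lt hterm1 this
    _ ≤ ε := by linarith

end AuxTight

lemma continuous_finSnoc {Z : ℕ → Type*} [∀ i, TopologicalSpace (Z i)] (k : ℕ) :
    Continuous (fun p : (∀ j : Fin k, Z j) × Z k =>
      (Fin.snoc p.1 p.2 : ∀ j : Fin (k + 1), Z j)) := by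
  apply continuous_pi
  intro j
  induction j using Fin.lastCases with
  | last => simpa using continuous_snd
  | cast i =>
    simp only [Fin.snoc_castSucc]
    exact (continuous_apply i).comp continuous_fst

lemma continuous_restr {Z : ℕ → Type*} [∀ i, TopologicalSpace (Z i)] (k : ℕ) :
    Continuous (restr (Z := Z) k) :=
  continuous_pi fun _ => continuous_apply _

section FwdLemmas

variable {X Y : ℕ → Type*} [∀ i, MeasurableSpace (X i)] [∀ i, MeasurableSpace (Y i)] {n : ℕ}

lemma fwd_markov (Q : ForwardFamily X Y n) (k : ℕ) (h : k ≤ n) :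
    IsMarkovKernel (fwd Q k h) := by
  induction k with
  | zero =>
      rw [fwd]
      haveI := Q.markov ⟨0, Nat.succ_pos n⟩
      exact Kernel.IsMarkovKernel.map _
        ((measurable_finSnoc (Z := Y) 0).comp (measurable_const.prodMk measurable_id))
  | succ k ih =>
      rw [fwd]
      haveI := ih (by omega)
      haveI := Q.markov ⟨k + 1, by omega⟩
      exact Kernel.IsMarkovKernel.map _ (measurable_finSnoc (Z := Y) (k + 1))

end FwdLemmas

section FwdFeller

variable {X Y : ℕ → Type*} {n : ℕ}
  [∀ i, TopologicalSpace (X i)] [∀ i, MeasurableSpace (X i)] [∀ i, BorelSpace (X i)]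
  [∀ i, PolishSpace (X i)]
  [∀ i, TopologicalSpace (Y i)] [∀ i, MeasurableSpace (Y i)] [∀ i, BorelSpace (Y i)]
  [∀ i, PolishSpace (Y i)]

lemma fwd_feller (Q : ForwardFamily X Y n) (hCB : CondCB Q) (k : ℕ) (h : k ≤ n) :
    ∀ g : (∀ j : Fin (k + 1), Y j) → ℝ, Continuous g → (∃ C, ∀ y, |g y| ≤ C) →
      Continuous fun x => ∫ y, g y ∂(fwd Q k h x) := by
  induction k with
  | zero =>
      intro g hg ⟨C, hC⟩
      haveI := Q.markov ⟨0, Nat.succ_pos n⟩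
      have hsnoc : Measurable (fun y₀ : Y 0 => (Fin.snoc default y₀ : ∀ j : Fin 1, Y j)) :=
        (measurable_finSnoc (Z := Y) 0).comp (measurable_const.prodMk measurable_id)
      have hrw : ∀ x, ∫ y, g y ∂(fwd Q 0 h x) =
          ∫ y₀, g (Fin.snoc default y₀) ∂(Q.q ⟨0, Nat.succ_pos n⟩ (default, x)) := by
        intro x
        rw [fwd, Kernel.map_apply _ hsnoc, integral_map hsnoc.aemeasurable
          hg.aestronglyMeasurable, Kernel.comap_apply]
      simp only [hrw]
      let G : BoundedContinuousFunction (Y 0) ℝ :=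
        BoundedContinuousFunction.ofNormedAddCommGroup
          (fun y₀ => g (Fin.snoc default y₀))
          (hg.comp ((continuous_finSnoc (Z := Y) 0).comp
            (continuous_const.prodMk continuous_id))) C
          (fun y₀ => by simpa using hC _)
      have := (hCB ⟨0, Nat.succ_pos n⟩ G).comp
        (continuous_id.prodMk (continuous_const : Continuous fun
          _ : ∀ j : Fin 1, X j => (default : ∀ j : Fin 0, Y j)))
      exact this
  | succ k ih =>
      intro g hg ⟨C, hC⟩
      have h' : k ≤ n := by omega
      have hk1 : k + 1 ≤ n := h
      haveI := fwd_markov Q k h'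
      haveI := Q.markov ⟨k + 1, by omega⟩
      set κ₂ : Kernel ((∀ j : Fin (k + 2), X j) × (∀ j : Fin (k + 1), Y j)) (Y (k + 1)) :=
        (Q.q ⟨k + 1, by omega⟩).comap
          (fun t : (∀ j : Fin (k + 2), X j) × (∀ j : Fin (k + 1), Y j) => (t.2, t.1))
          (measurable_snd.prodMk measurable_fst) with hκ₂
      haveI : IsMarkovKernel κ₂ := by rw [hκ₂]; infer_instance
      set κ₁ : Kernel (∀ j : Fin (k + 2), X j) (∀ j : Fin (k + 1), Y j) :=
        (fwd Q k h').comap (restr (k + 1)) (measurable_restr (k + 1)) with hκ₁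
      haveI : IsMarkovKernel κ₁ := by rw [hκ₁]; infer_instance
      have hsnoc := measurable_finSnoc (Z := Y) (k + 1)
      have hgsnoc : Continuous fun p : (∀ j : Fin (k + 1), Y j) × Y (k + 1) =>
          g (Fin.snoc p.1 p.2) := hg.comp (continuous_finSnoc (Z := Y) (k + 1))
      have hrw : ∀ x, ∫ y, g y ∂(fwd Q (k + 1) h x) =
          ∫ y, (∫ z, g (Fin.snoc y z) ∂(Q.q ⟨k + 1, by omega⟩ (y, x)))
            ∂(fwd Q k h' (restr (k + 1) x)) := by
        intro x
        haveI : IsProbabilityMeasure ((κ₁ ⊗ₖ κ₂) x) := by infer_instance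
        rw [fwd, Kernel.map_apply _ hsnoc, integral_map hsnoc.aemeasurable
          hg.aestronglyMeasurable]
        rw [ProbabilityTheory.integral_compProd
          (integrable_of_bounded_continuous _ hgsnoc (fun p => hC _))]
        rfl
      simp only [hrw]
      have hFcont : Continuous fun p : (∀ j : Fin (k + 2), X j) × (∀ j : Fin (k + 1), Y j) =>
          ∫ z, g (Fin.snoc p.2 z) ∂(Q.q ⟨k + 1, by omega⟩ (p.2, p.1)) := by
        refine continuous_integral_param
          (fun p : (∀ j : Fin (k + 2), X j) × (∀ j : Fin (k + 1), Y j) =>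
            Q.q ⟨k + 1, by omega⟩ (p.2, p.1))
          (fun p => (Q.markov ⟨k + 1, by omega⟩).isProbabilityMeasure _)
          ?_
          (fun p z => g (Fin.snoc p.2 z))
          (hg.comp ((continuous_finSnoc (Z := Y) (k + 1)).comp
            ((continuous_snd.comp continuous_fst).prodMk continuous_snd)))
          (fun p z => hC _)
        intro g' hg' hb'
        obtain ⟨C', hC'⟩ := hb'
        exact hCB ⟨k + 1, by omega⟩
          (BoundedContinuousFunction.ofNormedAddCommGroup g' hg' C'
            (fun z => by simpa using hC' z))
      have hFbound : ∀ (x : ∀ j : Fin (k + 2), X j) (y : ∀ j : Fin (k + 1), Y j),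
          |∫ z, g (Fin.snoc y z) ∂(Q.q ⟨k + 1, by omega⟩ (y, x))| ≤ C := by
        intro x y
        haveI : IsProbabilityMeasure (Q.q ⟨k + 1, by omega⟩ (y, x)) :=
          (Q.markov ⟨k + 1, by omega⟩).isProbabilityMeasure _
        exact abs_integral_le_of_abs_le _
          (hg.comp ((continuous_finSnoc (Z := Y) (k + 1)).comp
            (continuous_const.prodMk continuous_id))) (fun z => hC _)
      exact continuous_integral_param
        (fun x : ∀ j : Fin (k + 2), X j => fwd Q k h' (restr (k + 1) x))
        (fun x => (fwd_markov Q k h').isProbabilityMeasure _)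
        (fun g' hg' hb' => (ih h' g' hg' hb').comp (continuous_restr (k + 1)))
        (fun x y => ∫ z, g (Fin.snoc y z) ∂(Q.q ⟨k + 1, by omega⟩ (y, x)))
        hFcont hFbound

end FwdFeller

section Statements

variable {X Y : ℕ → Type*} {n : ℕ}
  [∀ i, TopologicalSpace (X i)] [∀ i, MeasurableSpace (X i)] [∀ i, BorelSpace (X i)]
  [∀ i, PolishSpace (X i)]
  [∀ i, TopologicalSpace (Y i)] [∀ i, MeasurableSpace (Y i)] [∀ i, BorelSpace (Y i)]
  [∀ i, PolishSpace (Y i)]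

/-- If the `X_i` are compact Polish, the `Y_i` Polish, and the forward
family `Q` satisfies (CB), then the family `{→Q_{0,n}(· | x^n) : x^n}` is uniformly
tight, hence relatively compact for weak convergence. -/
theorem fwd_kernel_family_uniformly_tight [∀ i, CompactSpace (X i)]
    (Q : ForwardFamily X Y n) (hCB : CondCB Q) :
    UniformlyTight {μ : Measure (∀ j : Fin (n + 1), Y j) |
        ∃ x : ∀ j : Fin (n + 1), X j, μ = fwd Q n le_rfl x} ∧
    ∀ x : ℕ → ∀ j : Fin (n + 1), X j,
      ∃ (φ : ℕ → ℕ) (μ0 : Measure (∀ j : Fin (n + 1), Y j)),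
        StrictMono φ ∧ IsProbabilityMeasure μ0 ∧
          WeakTendsto (fun k => fwd Q n le_rfl (x (φ k))) μ0 := by
  haveI := fwd_markov Q n le_rfl
  have hfel : ∀ g : (∀ j : Fin (n + 1), Y j) → ℝ, Continuous g →
      (∃ C, ∀ y, |g y| ≤ C) → Continuous fun x => ∫ y, g y ∂(fwd Q n le_rfl x) :=
    fwd_feller Q hCB n le_rfl
  constructor
  · intro ε hε
    by_cases h1 : 1 ≤ ε
    · exact ⟨∅, isCompact_empty, fun μ _ => by
        rw [tsub_eq_zero_of_le h1]; exact zero_le⟩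
    · push_neg at h1
      have hεtop : ε ≠ ⊤ := (h1.trans ENNReal.one_lt_top).ne
      have hεr : 0 < ε.toReal := ENNReal.toReal_pos hε.ne' hεtop
      obtain ⟨K, hK, hKle⟩ := feller_tight (fun x => fwd Q n le_rfl x)
        (fun x => (fwd_markov Q n le_rfl).isProbabilityMeasure _) hfel isCompact_univ hεr
      refine ⟨K, hK, ?_⟩
      rintro μ ⟨x, rfl⟩
      have hle := hKle x (Set.mem_univ x)
      rw [ENNReal.ofReal_toReal hεtop] at hle
      rw [tsub_le_iff_right]
      calc (1 : ℝ≥0∞) = fwd Q n le_rfl x Set.univ :=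
            (measure_univ (μ := fwd Q n le_rfl x)).symm
        _ = fwd Q n le_rfl x (K ∪ Kᶜ) := by rw [Set.union_compl_self]
        _ ≤ fwd Q n le_rfl x K + fwd Q n le_rfl x Kᶜ := measure_union_le _ _
        _ ≤ fwd Q n le_rfl x K + ε := add_le_add le_rfl hle
  · intro x
    obtain ⟨x0, φ, hφ, hconv⟩ := CompactSpace.tendsto_subseq x
    refine ⟨φ, fwd Q n le_rfl x0, hφ,
      (fwd_markov Q n le_rfl).isProbabilityMeasure _, ?_⟩
    intro f
    have hcont := hfel f f.continuous
      ⟨‖f‖, fun y => by simpa using f.norm_coe_le_norm y⟩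
    exact ((hcont.tendsto x0).comp hconv : _)

end Statements

end PaperDI
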